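/- If R is a reduced ring, then the trivial extension T(R, R) of R by the bimodule R is almost Armendariz. -/

import Mathlib

section Reduced
variable {R : Type*} [Ring R] [IsReduced R]

lemma red_comm {a b : R} (h : a * b = 0) : b * a = 0 := by
  have hn : IsNilpotent (b * a) := ⟨2, by
    rw [sq, mul_assoc, ← mul_assoc a b a, h, zero_mul, mul_zero]⟩
  exact hn.eq_zero

lemma red_mid {a b : R} (h : a * b = 0) (r : R) : a * r * b = 0 := by
  have hba := red_comm h
  have hn : IsNilpotent (a * r * b) := ⟨2, by
    rw [sq]
    calc a * r * b * (a * r * b) = a * r * (b * a) * (r * b) := by noncomm_ring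
    _ = 0 := by rw [hba, mul_zero, zero_mul]⟩
  exact hn.eq_zero

lemma red_sq_cancel {a b : R} (h : a * b * b = 0) : a * b = 0 := by
  have h1 : b * a * b = 0 := by
    have hn : IsNilpotent (b * a * b) := ⟨2, by
      rw [sq]
      calc b * a * b * (b * a * b) = b * (a * b * b) * (a * b) := by noncomm_ring
      _ = 0 := by rw [h, mul_zero, zero_mul]⟩
    exact hn.eq_zero
  have hn : IsNilpotent (a * b) := ⟨2, by
    rw [sq]
    calc a * b * (a * b) = a * (b * a * b) := by noncomm_ring
    _ = 0 := by rw [h1, mul_zero]⟩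
  exact hn.eq_zero

open Polynomial Finset in
theorem armendariz_of_reduced (f g : R[X]) (h : f * g = 0) (i j : ℕ) :
    f.coeff i * g.coeff j = 0 := by
  suffices H : ∀ k, ∀ i j : ℕ, i + j = k → f.coeff i * g.coeff j = 0 from
    H (i + j) i j rfl
  intro k
  induction k using Nat.strong_induction_on with
  | _ k IH =>
    have key : ∀ t, t ≤ k → f.coeff (k - t) * g.coeff t = 0 := by
      intro t
      induction t using Nat.strong_induction_on with
      | _ t IHt =>
        intro htk
        have hsum : ∑ p ∈ Finset.HasAntidiagonal.antidiagonal k, f.coeff p.1 * g.coeff p.2 = 0 := by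
          rw [← Polynomial.coeff_mul, h, Polynomial.coeff_zero]
        have hsum2 : ∑ p ∈ Finset.HasAntidiagonal.antidiagonal k,
            f.coeff p.1 * g.coeff p.2 * g.coeff t = 0 := by
          rw [← Finset.sum_mul, hsum, zero_mul]
        have hmem : (k - t, t) ∈ Finset.HasAntidiagonal.antidiagonal k := by
          rw [Finset.HasAntidiagonal.mem_antidiagonal]; omega
        have hsingle : ∑ p ∈ Finset.HasAntidiagonal.antidiagonal k,
            f.coeff p.1 * g.coeff p.2 * g.coeff t
            = f.coeff (k - t) * g.coeff t * g.coeff t := by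
          apply Finset.sum_eq_single_of_mem _ hmem
          intro p hp hne
          rw [Finset.HasAntidiagonal.mem_antidiagonal] at hp
          rcases lt_trichotomy p.2 t with hlt | heq | hgt
          · have hp1 : p.1 = k - p.2 := by omega
            have : f.coeff p.1 * g.coeff p.2 = 0 := by
              rw [hp1]; exact IHt p.2 hlt (by omega)
            rw [this, zero_mul]
          · exact absurd (Prod.ext (by omega) heq) hne
          · have hik : p.1 + t < k := by omega
            have : f.coeff p.1 * g.coeff t = 0 := IH (p.1 + t) hik p.1 t rfl
            exact red_mid this (g.coeff p.2)
        rw [hsingle] at hsum2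
        exact red_sq_cancel hsum2
    intro i j hij
    have : i = k - j := by omega
    rw [this]
    exact key j (by omega)

end Reduced

/-- An element `a` of a ring `R` is *strongly nilpotent* if every sequence
`a₀ = a`, `aₙ₊₁ ∈ aₙ R aₙ` is eventually zero. -/
def IsStronglyNilpotent {R : Type*} [Ring R] (a : R) : Prop :=
  ∀ s : ℕ → R, s 0 = a → (∀ n : ℕ, ∃ r : R, s (n + 1) = s n * r * s n) → ∃ n : ℕ, s n = 0

/-- The prime radical `P(R)` of a ring `R`: the intersection of all prime two-sided
ideals of `R`, equivalently the set of strongly nilpotent elements of `R`. -/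
def primeRadical (R : Type*) [Ring R] : Set R :=
  {a : R | IsStronglyNilpotent a}

/-- A ring `R` is *almost Armendariz* if whenever `f, g ∈ R[x]` satisfy `f g = 0`, every
product of a coefficient of `f` with a coefficient of `g` lies in the prime radical `P(R)`. -/
def IsAlmostArmendariz (R : Type*) [Ring R] : Prop :=
  ∀ f g : Polynomial R, f * g = 0 → ∀ i j : ℕ, f.coeff i * g.coeff j ∈ primeRadical R

/-- `fst` as a ring hom `T(R,R) →+* R`. -/
def tszeFstRingHom (R : Type*) [Ring R] : TrivSqZeroExt R R →+* R where
  toFun := fun x => x.fst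
  map_one' := rfl
  map_mul' x y := TrivSqZeroExt.fst_mul x y
  map_zero' := rfl
  map_add' x y := TrivSqZeroExt.fst_add x y

lemma tsze_fst_zero_snil {R : Type*} [Ring R] {x : TrivSqZeroExt R R}
    (hx : x.fst = 0) : IsStronglyNilpotent x := by
  intro s hs0 hstep
  obtain ⟨r, h1⟩ := hstep 0
  refine ⟨1, ?_⟩
  rw [h1, hs0]
  refine TrivSqZeroExt.ext ?_ ?_
  · simp [TrivSqZeroExt.fst_mul, hx]
  · simp [TrivSqZeroExt.snd_mul, TrivSqZeroExt.fst_mul, hx]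

/-- If `R` is a reduced ring, then the trivial extension `T(R, R)` of `R` by the
bimodule `R` is almost Armendariz. -/
theorem trivialExtension_almostArmendariz {R : Type*} [Ring R] [IsReduced R] :
    IsAlmostArmendariz (TrivSqZeroExt R R) := by
  intro f g hfg i j
  set F := tszeFstRingHom R
  have hmap : f.map F * g.map F = 0 := by
    rw [← Polynomial.map_mul, hfg, Polynomial.map_zero]
  have h0 : F (f.coeff i) * F (g.coeff j) = 0 := by
    have := armendariz_of_reduced (f.map F) (g.map F) hmap i j
    rwa [Polynomial.coeff_map, Polynomial.coeff_map] at this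
  apply tsze_fst_zero_snil
  rw [TrivSqZeroExt.fst_mul]
  exact h0
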